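/- Let K be a field, u₁,u₂,u₃ ∈ K[T₁,T₂] homogeneous of degree d, and let F₁,F₂ ∈ K[X₁,X₂,X₃] be homogeneous of degree 2 with no common factor such that T₁F₂(u(T)) − T₂F₁(u(T)) = 0, where u = (u₁,u₂,u₃). Suppose the polynomial E(X) = irreducible implicit equation of the curve has degree d, and let P(T,X) be a bihomogeneous polynomial of bidegree (i,j) vanishing under the substitution X ↦ u(T), with 2i + j < d. Then P(T,X) is a polynomial multiple of T₁F₂(X) − T₂F₁(X). -/

import Mathlib

open MvPolynomial

section Aux

variable {K : Type*}

lemma aux_dvd_aeval_sub {σ A : Type*} [CommRing K] [CommRing A] [Algebra K A]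
    (f g : σ → A) (c : A) (h : ∀ k, c ∣ f k - g k) (P : MvPolynomial σ K) :
    c ∣ aeval f P - aeval g P := by
  induction P using MvPolynomial.induction_on with
  | C a => simp
  | add p q hp hq =>
      have := dvd_add hp hq
      simpa [add_sub_add_comm] using this
  | mul_X p k hp =>
      have h1 : aeval f (p * X k) - aeval g (p * X k)
          = (aeval f p - aeval g p) * f k + aeval g p * (f k - g k) := by
        simp only [map_mul, aeval_X]; ring
      rw [h1]
      exact dvd_add (hp.mul_right _) ((h k).mul_left _)

lemma aux_scale [CommSemiring K] {A : Type*} [CommSemiring A] [Algebra K A]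
    {σ M : Type*} [AddCommMonoid M] (w : σ → M) (φ : M →+ ℕ)
    (P : MvPolynomial σ K) {n : M} (hP : P.IsWeightedHomogeneous w n)
    (f : σ → A) (r : A) :
    aeval (fun k => r ^ (φ (w k)) * f k) P = r ^ (φ n) * aeval f P := by
  rw [aeval_def, aeval_def, eval₂_eq, eval₂_eq, Finset.mul_sum]
  apply Finset.sum_congr rfl
  intro m hm
  have hdeg : Finsupp.weight w m = n := hP (mem_support_iff.mp hm)
  have h1 : ∀ i ∈ m.support, (r ^ φ (w i) * f i) ^ m i = r ^ (m i * φ (w i)) * f i ^ m i := by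
    intro i _; rw [mul_pow, ← pow_mul, mul_comm (φ (w i))]
  rw [Finset.prod_congr rfl h1, Finset.prod_mul_distrib, Finset.prod_pow_eq_pow_sum]
  have h2 : ∑ i ∈ m.support, m i * φ (w i) = φ n := by
    rw [← hdeg, Finsupp.weight_apply, Finsupp.sum, map_sum]
    exact Finset.sum_congr rfl fun i _ => by rw [map_nsmul, smul_eq_mul]
  rw [h2]; ring

lemma aux_aeval_homog [CommSemiring K] {σ τ M : Type*} [AddCommMonoid M]
    (w : σ → M) (φ : M →+ ℕ) (P : MvPolynomial σ K) {n : M}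
    (hP : P.IsWeightedHomogeneous w n) (f : σ → MvPolynomial τ K)
    (hf : ∀ k, (f k).IsHomogeneous (φ (w k))) :
    (aeval f P).IsHomogeneous (φ n) := by
  rw [aeval_def, eval₂_eq]
  apply IsHomogeneous.sum
  intro m hm
  have hdeg : Finsupp.weight w m = n := hP (mem_support_iff.mp hm)
  have h2 : ∑ i ∈ m.support, φ (w i) * m i = φ n := by
    rw [← hdeg, Finsupp.weight_apply, Finsupp.sum, map_sum]
    exact Finset.sum_congr rfl fun i _ => by rw [map_nsmul, smul_eq_mul, mul_comm]
  rw [← zero_add (φ n), MvPolynomial.algebraMap_eq, ← h2]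
  exact (isHomogeneous_C _ _).mul
    (IsHomogeneous.prod _ _ _ fun i _ => (hf i).pow (m i))

lemma aux_dvd_le {σ : Type*} [CommRing K] [IsDomain K] {p r : MvPolynomial σ K} {n m : ℕ}
    (hp : p.IsHomogeneous n) (hr : r.IsHomogeneous m) (hr0 : r ≠ 0)
    (hdvd : p ∣ r) : n ≤ m := by
  by_contra hlt
  push_neg at hlt
  obtain ⟨q, rfl⟩ := hdvd
  have hp0 : p ≠ 0 := by rintro rfl; simp at hr0
  apply hr0
  have key : ∀ k ∈ Finset.range (q.totalDegree + 1), homogeneousComponent k q = 0 := by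
    intro k _
    have h1 : p * q = ∑ k' ∈ Finset.range (q.totalDegree + 1),
        p * homogeneousComponent k' q := by
      conv_lhs => rw [← sum_homogeneousComponent q]
      rw [Finset.mul_sum]
    have h2 : homogeneousComponent (n + k) (p * q) = 0 := by
      rw [homogeneousComponent_of_mem ((mem_homogeneousSubmodule _ _).mpr hr), if_neg]
      omega
    rw [h1, map_sum] at h2
    rw [Finset.sum_eq_single k ?_ ?_] at h2
    · rw [homogeneousComponent_of_mem ((mem_homogeneousSubmodule _ _).mpr
        (hp.mul (homogeneousComponent_isHomogeneous k q))), if_pos rfl] at h2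
      exact (mul_eq_zero.mp h2).resolve_left hp0
    · intro b _ hb
      rw [homogeneousComponent_of_mem ((mem_homogeneousSubmodule _ _).mpr
        (hp.mul (homogeneousComponent_isHomogeneous b q))), if_neg (by omega)]
    · intro hk; exact absurd ‹k ∈ Finset.range _› hk
  conv_lhs => rw [← sum_homogeneousComponent q]
  rw [Finset.sum_congr rfl key, Finset.sum_const_zero, mul_zero]



lemma aux_dep [Field K] [IsAlgClosed K] {e : ℕ}
    (S : MvPolynomial (Fin 2) K) (hS : S.IsHomogeneous e) (hS0 : S ≠ 0)
    (v w : MvPolynomial (Fin 2) K) (hvw : aeval ![v, w] S = 0) :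
    ∃ a b : K, (a ≠ 0 ∨ b ≠ 0) ∧ C a * v = C b * w := by
  rcases eq_or_ne w 0 with rfl | hw0
  · exact ⟨0, 1, Or.inr one_ne_zero, by simp⟩
  rcases eq_or_ne v 0 with rfl | hv0
  · exact ⟨1, 0, Or.inl one_ne_zero, by simp⟩
  -- the univariate avatar of S
  set q : Polynomial K := aeval ![Polynomial.X, 1] S with hqdef
  have hq0 : q ≠ 0 := by
    obtain ⟨m, hm⟩ := MvPolynomial.ne_zero_iff.mp hS0
    intro h0
    have hprod : ∀ m' : Fin 2 →₀ ℕ,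
        (∏ i ∈ m'.support, (![Polynomial.X, (1 : Polynomial K)] i) ^ m' i)
          = Polynomial.X ^ m' 0 := by
      intro m'
      rw [Finset.prod_subset (Finset.subset_univ m'.support)
        (fun i _ hi => by rw [Finsupp.notMem_support_iff.mp hi, pow_zero]),
        Fin.prod_univ_two]
      simp
    have hwt : ∀ m' ∈ S.support, m' 0 + m' 1 = e := by
      intro m' hm'
      have := hS (mem_support_iff.mp hm')
      rw [Finsupp.weight_apply, Finsupp.sum_fintype _ _ (fun i => by simp)] at this
      simpa [Fin.sum_univ_two] using this
    have hqc : q.coeff (m 0) = MvPolynomial.coeff m S := by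
      rw [hqdef, aeval_def, eval₂_eq, Polynomial.finset_sum_coeff]
      rw [Finset.sum_eq_single m]
      · rw [hprod, Polynomial.algebraMap_eq, Polynomial.coeff_C_mul,
          Polynomial.coeff_X_pow, if_pos rfl, mul_one]
      · intro m' hm' hne
        rw [hprod, Polynomial.algebraMap_eq, Polynomial.coeff_C_mul,
          Polynomial.coeff_X_pow, if_neg, mul_zero]
        intro hcon
        apply hne
        ext i
        have h1 : m' 0 = m 0 := hcon.symm
        have h2 : m' 1 = m 1 := by
          have ha := hwt m' hm'
          have hb := hwt m (mem_support_iff.mpr hm)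
          omega
        match i with
        | 0 => exact h1
        | 1 => exact h2
      · intro hm'; exact absurd (mem_support_iff.mpr hm) hm'
    rw [h0] at hqc
    exact hm (by simpa using hqc.symm)
  -- move to the fraction field
  set L := FractionRing (MvPolynomial (Fin 2) K) with hLdef
  have injD : Function.Injective (algebraMap (MvPolynomial (Fin 2) K) L) :=
    IsFractionRing.injective _ _
  set ψ : MvPolynomial (Fin 2) K →ₐ[K] L :=
    IsScalarTower.toAlgHom K (MvPolynomial (Fin 2) K) L with hψdef
  have hψ : ∀ x : MvPolynomial (Fin 2) K, ψ x = algebraMap (MvPolynomial (Fin 2) K) L x :=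
    fun x => rfl
  have hwL : (ψ w : L) ≠ 0 := fun h => hw0 (injD (by simpa [hψ] using h))
  set z : L := ψ v * (ψ w)⁻¹ with hzdef
  -- S(ψ v, ψ w) = 0
  have h3 : (fun i => ψ (![v, w] i)) = ![ψ v, ψ w] := by
    funext i; fin_cases i <;> simp
  have h1 : aeval ![ψ v, ψ w] S = 0 := by
    rw [← h3, ← comp_aeval_apply, hvw, map_zero]
  -- rescale
  have h4 : aeval ![z, (1:L)] S = 0 := by
    have hsc := aux_scale (fun _ : Fin 2 => (1 : ℕ)) (AddMonoidHom.id ℕ) S hS ![z, 1] (ψ w)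
    have h5 : (fun k => (ψ w : L) ^ ((AddMonoidHom.id ℕ) ((fun _ : Fin 2 => (1:ℕ)) k)) * ![z, 1] k)
        = ![ψ v, ψ w] := by
      funext i; fin_cases i
      · show ψ w ^ (1:ℕ) * z = ψ v
        rw [pow_one, hzdef, mul_comm (ψ v), ← mul_assoc, mul_inv_cancel₀ hwL, one_mul]
      · show ψ w ^ (1:ℕ) * 1 = ψ w
        rw [pow_one, mul_one]
    rw [h5, h1] at hsc
    rcases mul_eq_zero.mp hsc.symm with h | h
    · exact absurd h (pow_ne_zero _ hwL)
    · exact h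
  -- z is a root of q
  have h6 : Polynomial.aeval z q = 0 := by
    have h7 : (fun i => Polynomial.aeval (R := K) z (![Polynomial.X, (1 : Polynomial K)] i))
        = ![z, (1:L)] := by
      funext i; fin_cases i <;> simp
    rw [hqdef, comp_aeval_apply, h7, h4]
  -- use splitting over K
  have hsplit : q.Splits := IsAlgClosed.splits q
  have hfact := hsplit.eq_prod_roots
  have h7 : (0:L) = Polynomial.aeval z (Polynomial.C q.leadingCoeff *
      (q.roots.map fun a => Polynomial.X - Polynomial.C a).prod) := by
    rw [← hfact, h6]
  rw [map_mul, Polynomial.aeval_C] at h7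
  have hlc : (algebraMap K L) q.leadingCoeff ≠ 0 := by
    intro h
    exact hq0 (Polynomial.leadingCoeff_eq_zero.mp ((map_eq_zero _).mp h))
  have h8 : Polynomial.aeval z (q.roots.map fun a => Polynomial.X - Polynomial.C a).prod = 0 := by
    rcases mul_eq_zero.mp h7.symm with h | h
    · exact absurd h hlc
    · exact h
  rw [map_multiset_prod, Multiset.map_map] at h8
  have h9 := Multiset.prod_eq_zero_iff.mp h8
  obtain ⟨r, hr, hrx⟩ := Multiset.mem_map.mp h9
  simp only [Function.comp_apply, map_sub, Polynomial.aeval_X, Polynomial.aeval_C] at hrx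
  have hz : z = algebraMap K L r := sub_eq_zero.mp hrx
  -- conclude
  refine ⟨1, r, Or.inl one_ne_zero, ?_⟩
  apply injD
  have hKL : ∀ c : K, algebraMap K L c = ψ (C c) := fun c => rfl
  rw [map_mul, map_mul, ← hψ, ← hψ, ← hψ, ← hψ]
  have h9' : ψ v = algebraMap K L r * ψ w := by
    rw [← hz, hzdef, mul_assoc, inv_mul_cancel₀ hwL, mul_one]
  rw [hKL] at h9'
  calc ψ (C 1) * ψ v = ψ v := by simp
    _ = ψ (C r) * ψ w := h9'

lemma aux_elim {D : Type*} [CommRing D] [IsDomain D] [UniqueFactorizationMonoid D]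
    (p q : Polynomial D) (hpq : IsRelPrime p q) (hp : p ≠ 0) :
    ∃ (a b : Polynomial D) (s : D), s ≠ 0 ∧ a * p + b * q = Polynomial.C s := by
  classical
  letI := UniqueFactorizationMonoid.normalizationMonoid (α := D)
  letI := UniqueFactorizationMonoid.toNormalizedGCDMonoid D
  set F := FractionRing D with hFdef
  have inj : Function.Injective (algebraMap D F) := IsFractionRing.injective D F
  have hinj : Function.Injective (Polynomial.map (algebraMap D F)) :=
    fun _ _ h => Polynomial.ext fun n => inj (by
      have := congrArg (fun r => Polynomial.coeff r n) h
      simpa [Polynomial.coeff_map] using this)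
  set pm := p.map (algebraMap D F) with hpmdef
  set qm := q.map (algebraMap D F) with hqmdef
  have hpm0 : pm ≠ 0 := fun h => hp (hinj (by simpa using h))
  -- relative primality upstairs
  have key : IsRelPrime pm qm := by
    intro g hg1 hg2
    by_contra hgu
    have hg0 : g ≠ 0 := by rintro rfl; exact hpm0 (zero_dvd_iff.mp hg1)
    have hgd : 1 ≤ g.natDegree := by
      by_contra hd
      push_neg at hd
      have hC : g = Polynomial.C (g.coeff 0) := Polynomial.eq_C_of_natDegree_eq_zero (by omega)
      apply hgu
      rw [hC]
      refine Polynomial.isUnit_C.mpr (isUnit_iff_ne_zero.mpr (fun h => hg0 ?_))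
      rw [hC, h, map_zero]
    obtain ⟨b, hb⟩ := IsLocalization.integerNormalization_map_to_map (nonZeroDivisors D) g
    set g₀ := IsLocalization.integerNormalization (nonZeroDivisors D) g with hg₀def
    have hb0 : (b : D) ≠ 0 := nonZeroDivisors.ne_zero b.2
    have hbF : algebraMap D F b ≠ 0 := fun h => hb0 (inj (by simpa using h))
    have hbu : IsUnit (Polynomial.C (algebraMap D F (b : D))) :=
      Polynomial.isUnit_C.mpr (isUnit_iff_ne_zero.mpr hbF)
    have hbsmul : g₀.map (algebraMap D F) = Polynomial.C (algebraMap D F (b : D)) * g := by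
      rw [hb, ← Polynomial.smul_eq_C_mul, algebraMap_smul]
    set g₁ := g₀.primPart with hg₁def
    have hg₁prim : g₁.IsPrimitive := g₀.isPrimitive_primPart
    have hdeg0 : g₀.natDegree = g.natDegree := by
      rw [← Polynomial.natDegree_map_eq_of_injective inj g₀, hbsmul,
        Polynomial.natDegree_C_mul hbF]
    have hg₁deg : 1 ≤ g₁.natDegree := by
      have e1 : g₁.natDegree = g₀.natDegree := g₀.natDegree_primPart
      omega
    have hg₁m_dvd : ∀ r : Polynomial D, r ≠ 0 → g ∣ r.map (algebraMap D F) → g₁ ∣ r := by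
      intro r hr0 hgr
      have h1 : g₁.map (algebraMap D F) ∣ g₀.map (algebraMap D F) :=
        Polynomial.map_dvd _ g₀.primPart_dvd
      rw [hbsmul] at h1
      have h2 : g₁.map (algebraMap D F) ∣ r.map (algebraMap D F) :=
        (h1.trans ((associated_unit_mul_left g _ hbu).dvd)).trans hgr
      -- write r = C content * primPart
      have hcont : algebraMap D F r.content ≠ 0 := by
        intro h
        exact hr0 (Polynomial.content_eq_zero_iff.mp (inj (by simpa using h)))
      have h3 : r.map (algebraMap D F)
          = Polynomial.C (algebraMap D F r.content) * r.primPart.map (algebraMap D F) := by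
        conv_lhs => rw [r.eq_C_content_mul_primPart]
        rw [Polynomial.map_mul, Polynomial.map_C]
      rw [h3] at h2
      have h4 : g₁.map (algebraMap D F) ∣ r.primPart.map (algebraMap D F) :=
        h2.trans ((associated_unit_mul_left _ _
          (Polynomial.isUnit_C.mpr (isUnit_iff_ne_zero.mpr hcont))).dvd)
      exact (hg₁prim.dvd_of_fraction_map_dvd_fraction_map h4).trans
        r.primPart_dvd
    have hq0' : q ≠ 0 ∨ True := Or.inr trivial
    have hg₁p : g₁ ∣ p := hg₁m_dvd p hp hg1
    have hg₁q : g₁ ∣ q := by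
      rcases eq_or_ne q 0 with rfl | hq0
      · exact dvd_zero _
      · exact hg₁m_dvd q hq0 hg2
    have := hpq hg₁p hg₁q
    have := Polynomial.natDegree_eq_zero_of_isUnit this
    omega
  -- Bezout upstairs
  have hco : IsCoprime pm qm := key.isCoprime
  obtain ⟨A, B, hAB⟩ := hco
  obtain ⟨bA, hbA⟩ := IsLocalization.integerNormalization_map_to_map (nonZeroDivisors D) A
  obtain ⟨bB, hbB⟩ := IsLocalization.integerNormalization_map_to_map (nonZeroDivisors D) B
  set A₀ := IsLocalization.integerNormalization (nonZeroDivisors D) A with hA₀def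
  set B₀ := IsLocalization.integerNormalization (nonZeroDivisors D) B with hB₀def
  have hbA' : A₀.map (algebraMap D F) = Polynomial.C (algebraMap D F (bA : D)) * A := by
    rw [hbA, ← Polynomial.smul_eq_C_mul, algebraMap_smul]
  have hbB' : B₀.map (algebraMap D F) = Polynomial.C (algebraMap D F (bB : D)) * B := by
    rw [hbB, ← Polynomial.smul_eq_C_mul, algebraMap_smul]
  refine ⟨Polynomial.C (bB : D) * A₀, Polynomial.C (bA : D) * B₀, (bA : D) * (bB : D),
    mul_ne_zero (nonZeroDivisors.ne_zero bA.2) (nonZeroDivisors.ne_zero bB.2), ?_⟩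
  apply hinj
  rw [Polynomial.map_add, Polynomial.map_mul, Polynomial.map_mul, Polynomial.map_mul,
    Polynomial.map_mul, Polynomial.map_C, Polynomial.map_C, Polynomial.map_C,
    hbA', hbB', map_mul, Polynomial.C_mul]
  push_cast
  linear_combination (Polynomial.C (algebraMap D F (bA : D))
    * Polynomial.C (algebraMap D F (bB : D))) * hAB

lemma aux_split [Field K] {d : ℕ} (hd : 1 ≤ d) (v w : MvPolynomial (Fin 2) K)
    (hv : v.IsHomogeneous d) (hw : w.IsHomogeneous d)
    (s : MvPolynomial (Fin 2) K) (hs : s ≠ 0) (h : aeval ![v, w] s = 0) :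
    ∃ (k : ℕ) (S : MvPolynomial (Fin 2) K), S.IsHomogeneous k ∧ S ≠ 0 ∧ aeval ![v, w] S = 0 := by
  have hvw : ∀ i : Fin 2, (![v, w] i).IsHomogeneous d := by
    intro i; fin_cases i <;> simpa
  have hterm : ∀ k, (aeval ![v, w] (homogeneousComponent k s)).IsHomogeneous (d * k) :=
    fun k => (homogeneousComponent_isHomogeneous k s).aeval _ hvw
  have hex : ∃ k, homogeneousComponent k s ≠ 0 := by
    by_contra hall
    push_neg at hall
    apply hs
    conv_lhs => rw [← sum_homogeneousComponent s]
    simp [hall]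
  obtain ⟨k, hk⟩ := hex
  refine ⟨k, homogeneousComponent k s, homogeneousComponent_isHomogeneous k s, hk, ?_⟩
  have hkr : k ∈ Finset.range (s.totalDegree + 1) := by
    rw [Finset.mem_range, Nat.lt_succ_iff]
    by_contra hgt
    push_neg at hgt
    exact hk (homogeneousComponent_eq_zero _ _ hgt)
  have hsum : ∑ k' ∈ Finset.range (s.totalDegree + 1),
      aeval ![v, w] (homogeneousComponent k' s) = 0 := by
    rw [← map_sum, sum_homogeneousComponent, h]
  have := congrArg (homogeneousComponent (d * k)) hsum
  rw [map_sum, map_zero, Finset.sum_eq_single k ?_ ?_] at this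
  · rwa [homogeneousComponent_of_mem ((mem_homogeneousSubmodule _ _).mpr (hterm k)),
      if_pos rfl] at this
  · intro b _ hb
    rw [homogeneousComponent_of_mem ((mem_homogeneousSubmodule _ _).mpr (hterm b)), if_neg]
    intro hcon
    exact hb (Nat.eq_of_mul_eq_mul_left (by omega) hcon).symm
  · intro hk'; exact absurd hkr hk'

lemma aux_pair [Field K] [IsAlgClosed K] {d : ℕ} (hd : 1 ≤ d)
    (u : Fin 3 → MvPolynomial (Fin 2) K) (hu : ∀ t, (u t).IsHomogeneous d)
    (E R : MvPolynomial (Fin 3) K) (hE0 : E ≠ 0) (hER : IsRelPrime E R)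
    (hEc : aeval u E = 0) (hRc : aeval u R = 0) (ρ : Fin 3 ≃ Fin 3) :
    ∃ a b : K, (a ≠ 0 ∨ b ≠ 0) ∧ C a * u (ρ.symm 1) = C b * u (ρ.symm 2) := by
  classical
  set τ : MvPolynomial (Fin 3) K ≃ₐ[K] Polynomial (MvPolynomial (Fin 2) K) :=
    (renameEquiv K ρ).trans (MvPolynomial.finSuccEquiv K 2) with hτdef
  -- transfer relative primality
  have hrpτ : IsRelPrime (τ E) (τ R) := by
    intro g hg1 hg2
    have h1 : τ.symm g ∣ E := by
      have := map_dvd τ.symm.toAlgHom hg1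
      simpa using this
    have h2 : τ.symm g ∣ R := by
      have := map_dvd τ.symm.toAlgHom hg2
      simpa using this
    have h3 := hER h1 h2
    have h4 := h3.map τ.toAlgHom
    simpa using h4
  have hτE0 : τ E ≠ 0 := fun h => hE0 (by
    have := congrArg τ.symm h
    simpa using this)
  obtain ⟨a, b, s, hs0, hcomb⟩ := aux_elim (τ E) (τ R) hrpτ hτE0
  -- evaluation homomorphism downstairs
  set pairf : Fin 2 → MvPolynomial (Fin 2) K := fun t => u (ρ.symm t.succ) with hpair
  set Θ : Polynomial (MvPolynomial (Fin 2) K) →+* MvPolynomial (Fin 2) K :=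
    Polynomial.eval₂RingHom (MvPolynomial.aeval pairf).toRingHom (u (ρ.symm 0)) with hΘdef
  have key : ∀ pp : MvPolynomial (Fin 3) K, Θ (τ pp) = aeval u pp := by
    intro pp
    induction pp using MvPolynomial.induction_on with
    | C c =>
        have hC : τ (C c) = Polynomial.C (C c) := by
          simp only [hτdef, AlgEquiv.trans_apply, renameEquiv_apply, rename_C]
          simp [MvPolynomial.finSuccEquiv_apply]
        rw [hC]
        simp [hΘdef, MvPolynomial.algebraMap_eq]
    | add f g hf hg => rw [map_add, map_add, hf, hg, map_add]
    | mul_X f t hf =>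
        rw [map_mul, map_mul, hf, map_mul]
        congr 1
        have hgen : ∀ st : Fin 3, Θ (MvPolynomial.finSuccEquiv K 2 (X st)) = u (ρ.symm st) := by
          intro st
          induction st using Fin.cases with
          | zero =>
              rw [finSuccEquiv_X_zero]
              simp [hΘdef]
          | succ t' =>
              rw [finSuccEquiv_X_succ]
              simp [hΘdef, hpair]
        have hτX : τ (X t) = MvPolynomial.finSuccEquiv K 2 (X (ρ t)) := by
          simp [hτdef, renameEquiv_apply, rename_X]
        rw [hτX, hgen (ρ t), Equiv.symm_apply_apply, aeval_X]
  -- apply Θ to the combination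
  have h5 : aeval pairf s = 0 := by
    have h6 := congrArg Θ hcomb
    rw [map_add, map_mul, map_mul, key, key, hEc, hRc, mul_zero, mul_zero, add_zero] at h6
    have h7 : Θ (Polynomial.C s) = aeval pairf s := by simp [hΘdef]
    rw [← h7]
    exact h6.symm
  -- split into homogeneous pieces
  have hpair2 : ![u (ρ.symm 1), u (ρ.symm 2)] = pairf := by
    funext t
    fin_cases t <;> simp [hpair] <;> rfl
  obtain ⟨k, S, hShom, hS0, hSvan⟩ := aux_split hd (u (ρ.symm 1)) (u (ρ.symm 2))
    (hu _) (hu _) s hs0 (by rw [hpair2]; exact h5)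
  exact aux_dep S hShom hS0 _ _ hSvan

lemma aux_main4 [Field K] [IsAlgClosed K] {d e : ℕ}
    (u : Fin 3 → MvPolynomial (Fin 2) K)
    (hu : ∀ t, (u t).IsHomogeneous d)
    (hucop : ∀ g : MvPolynomial (Fin 2) K, g ∣ u 0 → g ∣ u 1 → g ∣ u 2 → IsUnit g)
    (E : MvPolynomial (Fin 3) K) (hE : Irreducible E) (hEdeg : E.IsHomogeneous d)
    (hEcurve : aeval u E = 0)
    (R : MvPolynomial (Fin 3) K) (hRhom : R.IsHomogeneous e) (he : e < d)
    (hR : aeval u R = 0) : R = 0 := by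
  classical
  have hd : 1 ≤ d := by omega
  by_contra hR0
  have hnotunit : ∀ (p : MvPolynomial (Fin 2) K) (n : ℕ),
      p.IsHomogeneous n → 1 ≤ n → ¬ IsUnit p := by
    intro p n hp hn hup
    have h1 := aux_dvd_le hp (isHomogeneous_one (Fin 2) K) one_ne_zero hup.dvd
    omega
  have hEndvd : ¬ E ∣ R := by
    intro hdvd
    have := aux_dvd_le hEdeg hRhom hR0 hdvd
    omega
  have hER : IsRelPrime E R := by
    intro g hgE hgR
    obtain ⟨h, hEh⟩ := hgE
    rcases hE.isUnit_or_isUnit hEh with hg | hh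
    · exact hg
    · exfalso
      apply hEndvd
      have hEg : E ∣ g := ⟨↑hh.unit⁻¹, by rw [hEh, mul_assoc, IsUnit.mul_val_inv, mul_one]⟩
      exact hEg.trans hgR
  -- three pairwise dependencies
  have pair : ∀ ρ : Fin 3 ≃ Fin 3,
      ∃ a b : K, (a ≠ 0 ∨ b ≠ 0) ∧ C a * u (ρ.symm 1) = C b * u (ρ.symm 2) :=
    fun ρ => aux_pair hd u hu E R hE.ne_zero hER hEcurve hR ρ
  -- dependence gives divisibility from a nonzero element
  have hdvd_of : ∀ x y : MvPolynomial (Fin 2) K, x ≠ 0 →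
      (∃ a b : K, (a ≠ 0 ∨ b ≠ 0) ∧ C a * x = C b * y) → x ∣ y := by
    rintro x y hx ⟨a, b, hab, heq⟩
    have hb : b ≠ 0 := by
      rintro rfl
      rcases hab with ha | hb'
      · apply hx
        have h0 : C a * x = 0 := by rw [heq, map_zero, zero_mul]
        rcases mul_eq_zero.mp h0 with h | h
        · exact absurd (by simpa using h) ha
        · exact h
      · exact hb' rfl
    refine ⟨C (b⁻¹ * a), ?_⟩
    have h1 : C (b⁻¹) * (C a * x) = C (b⁻¹) * (C b * y) := by rw [heq]
    rw [← mul_assoc, ← mul_assoc, ← C_mul, ← C_mul, inv_mul_cancel₀ hb, C_1, one_mul] at h1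
    rw [← h1]
    ring
  -- explicit permutations
  let ρ01 : Fin 3 ≃ Fin 3 := ⟨![1, 2, 0], ![2, 0, 1], by decide, by decide⟩
  let ρ02 : Fin 3 ≃ Fin 3 := ⟨![1, 0, 2], ![1, 0, 2], by decide, by decide⟩
  let ρ12 : Fin 3 ≃ Fin 3 := Equiv.refl _
  have h01 : ∃ a b : K, (a ≠ 0 ∨ b ≠ 0) ∧ C a * u 0 = C b * u 1 := by
    have := pair ρ01
    have e1 : ρ01.symm 1 = 0 := rfl
    have e2 : ρ01.symm 2 = 1 := rfl
    rwa [e1, e2] at this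
  have h02 : ∃ a b : K, (a ≠ 0 ∨ b ≠ 0) ∧ C a * u 0 = C b * u 2 := by
    have := pair ρ02
    have e1 : ρ02.symm 1 = 0 := rfl
    have e2 : ρ02.symm 2 = 2 := rfl
    rwa [e1, e2] at this
  have h12 : ∃ a b : K, (a ≠ 0 ∨ b ≠ 0) ∧ C a * u 1 = C b * u 2 := by
    have := pair ρ12
    exact this
  -- endgame case analysis
  rcases eq_or_ne (u 0) 0 with hu0 | hu0
  · rcases eq_or_ne (u 1) 0 with hu1 | hu1
    · rcases eq_or_ne (u 2) 0 with hu2 | hu2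
      · -- all zero
        have := hucop (X 0) (hu0 ▸ dvd_zero _) (hu1 ▸ dvd_zero _) (hu2 ▸ dvd_zero _)
        have h1 := aux_dvd_le (isHomogeneous_X K (0 : Fin 2))
          (isHomogeneous_one (Fin 2) K) one_ne_zero this.dvd
        omega
      · have := hucop (u 2) (hu0 ▸ dvd_zero _) (hu1 ▸ dvd_zero _) dvd_rfl
        exact hnotunit (u 2) d (hu 2) hd this
    · have hdvd12 : u 1 ∣ u 2 := hdvd_of _ _ hu1 h12
      have := hucop (u 1) (hu0 ▸ dvd_zero _) dvd_rfl hdvd12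
      exact hnotunit (u 1) d (hu 1) hd this
  · have hdvd01 : u 0 ∣ u 1 := hdvd_of _ _ hu0 h01
    have hdvd02 : u 0 ∣ u 2 := hdvd_of _ _ hu0 h02
    have := hucop (u 0) dvd_rfl hdvd01 hdvd02
    exact hnotunit (u 0) d (hu 0) hd this



end Aux

/-- Let `u₁,u₂,u₃ ∈ K[T₁,T₂]` be homogeneous of degree `d` without common
factor, properly parameterizing the irreducible curve `E = 0` of degree `d`,
with inverse given by coprime quadratic forms `F₁, F₂` (so
`T₁F₂(u(T)) − T₂F₁(u(T)) = 0` and `T₁F₂(X) − T₂F₁(X)` is irreducible).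
If `P` is bihomogeneous of bidegree `(i,j)` with `P(T, u(T)) = 0` and
`2i + j < d`, then `P` is a polynomial multiple of `T₁F₂(X) − T₂F₁(X)`. -/
theorem stmt_13 (K : Type*) [Field K] [IsAlgClosed K] (d i j : ℕ)
    (u₁ u₂ u₃ : MvPolynomial (Fin 2) K)
    (hu₁ : u₁.IsHomogeneous d) (hu₂ : u₂.IsHomogeneous d)
    (hu₃ : u₃.IsHomogeneous d)
    (hucop : ∀ g : MvPolynomial (Fin 2) K, g ∣ u₁ → g ∣ u₂ → g ∣ u₃ → IsUnit g)
    (F₁ F₂ : MvPolynomial (Fin 3) K)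
    (hF₁ : F₁.IsHomogeneous 2) (hF₂ : F₂.IsHomogeneous 2)
    (hFcop : IsRelPrime F₁ F₂)
    (hrel : X 0 * aeval ![u₁, u₂, u₃] F₂ - X 1 * aeval ![u₁, u₂, u₃] F₁ = 0)
    (E : MvPolynomial (Fin 3) K) (hE : Irreducible E) (hEdeg : E.IsHomogeneous d)
    (hEcurve : aeval ![u₁, u₂, u₃] E = 0)
    -- the moving conic T₁F₂(X) − T₂F₁(X) in K[T₁,T₂,X₁,X₂,X₃]
    (G : MvPolynomial (Fin 2 ⊕ Fin 3) K)
    (hG : G = X (Sum.inl 0) * rename Sum.inr F₂ - X (Sum.inl 1) * rename Sum.inr F₁)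
    (hGirr : Irreducible G)
    (P : MvPolynomial (Fin 2 ⊕ Fin 3) K)
    (hP : P.IsWeightedHomogeneous
      (Sum.elim (fun _ => ((1 : ℕ), (0 : ℕ))) (fun _ => ((0 : ℕ), (1 : ℕ))))
      (i, j))
    (hPker : aeval (Sum.elim (fun k => X k) ![u₁, u₂, u₃]) P = 0)
    (hdeg : 2 * i + j < d) :
    G ∣ P := by
  classical
  set u : Fin 3 → MvPolynomial (Fin 2) K := ![u₁, u₂, u₃] with hudef
  set W : Fin 2 ⊕ Fin 3 → ℕ × ℕ :=
    Sum.elim (fun _ => ((1 : ℕ), (0 : ℕ))) (fun _ => ((0 : ℕ), (1 : ℕ))) with hWdef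
  set φ₁ : ℕ × ℕ →+ ℕ := AddMonoidHom.fst ℕ ℕ with hφ₁def
  set φ₂ : ℕ × ℕ →+ ℕ :=
    { toFun := fun p => 2 * p.1 + p.2
      map_zero' := rfl
      map_add' := fun x y => by
        simp only [Prod.fst_add, Prod.snd_add]
        ring } with hφ₂def
  -- Step 1: the common factor H with F₁(u) = T₁ H, F₂(u) = T₂ H
  have hrel' : X 0 * aeval u F₂ = X 1 * aeval u F₁ := sub_eq_zero.mp hrel
  have hX0prime : Prime (X 0 : MvPolynomial (Fin 2) K) := by
    rw [← MulEquiv.prime_iff (MvPolynomial.finSuccEquiv K 1).toMulEquiv]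
    have hfe : (MvPolynomial.finSuccEquiv K 1).toMulEquiv (X 0 : MvPolynomial (Fin 2) K)
        = Polynomial.X := by
      show MvPolynomial.finSuccEquiv K 1 (X 0) = Polynomial.X
      exact finSuccEquiv_X_zero
    rw [hfe]
    exact Polynomial.prime_X
  have hX0X1 : ¬ (X 0 : MvPolynomial (Fin 2) K) ∣ X 1 := by
    intro hdvd
    have h1 := map_dvd (MvPolynomial.eval ![(0 : K), 1]) hdvd
    rw [eval_X, eval_X] at h1
    simp at h1
  have hdvdA : (X 0 : MvPolynomial (Fin 2) K) ∣ X 1 * aeval u F₁ :=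
    ⟨aeval u F₂, hrel'.symm⟩
  obtain ⟨H, hH1⟩ : (X 0 : MvPolynomial (Fin 2) K) ∣ aeval u F₁ :=
    (hX0prime.2.2 _ _ hdvdA).resolve_left hX0X1
  have hH2 : aeval u F₂ = X 1 * H := by
    have hc : X 0 * aeval u F₂ = X 0 * (X 1 * H) := by rw [hrel', hH1]; ring
    exact mul_left_cancel₀ (MvPolynomial.X_ne_zero _) hc
  -- Step 2: the reduced form R'
  set R' : MvPolynomial (Fin 3) K := aeval (Sum.elim ![F₁, F₂] X) P with hR'def
  have hR'hom : R'.IsHomogeneous (2 * i + j) := by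
    have hf : ∀ k, ((Sum.elim ![F₁, F₂] X : Fin 2 ⊕ Fin 3 → MvPolynomial (Fin 3) K) k).IsHomogeneous (φ₂ (W k)) := by
      rintro (t | t)
      · fin_cases t
        · exact hF₁
        · exact hF₂
      · exact isHomogeneous_X K t
    exact aux_aeval_homog W φ₂ P hP _ hf
  have hcomp : aeval u R' = aeval (fun k => aeval u (Sum.elim ![F₁, F₂] X k)) P :=
    comp_aeval_apply _ _ _
  have hfun1 : (fun k => aeval u (Sum.elim ![F₁, F₂] X k))
      = fun k => H ^ (φ₁ (W k)) * (Sum.elim ![(X 0 : MvPolynomial (Fin 2) K), X 1] u k) := by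
    funext k
    rcases k with t | t
    · fin_cases t
      · show aeval u F₁ = H ^ (1 : ℕ) * X 0
        rw [hH1, pow_one, mul_comm]
      · show aeval u F₂ = H ^ (1 : ℕ) * X 1
        rw [hH2, pow_one, mul_comm]
    · show aeval u (X t) = H ^ (0 : ℕ) * u t
      rw [aeval_X, pow_zero, one_mul]
  have hbase : (Sum.elim ![(X 0 : MvPolynomial (Fin 2) K), X 1] u)
      = (Sum.elim (fun k => (X k : MvPolynomial (Fin 2) K)) u) := by
    funext k
    rcases k with t | t
    · fin_cases t <;> rfl
    · rfl
  have hR'u : aeval u R' = 0 := by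
    rw [hcomp, hfun1, aux_scale W φ₁ P hP _ H, hbase, hPker, mul_zero]
  -- R' vanishes identically
  have hu' : ∀ t, (u t).IsHomogeneous d := by
    intro t
    fin_cases t
    · exact hu₁
    · exact hu₂
    · exact hu₃
  have hucop' : ∀ g : MvPolynomial (Fin 2) K, g ∣ u 0 → g ∣ u 1 → g ∣ u 2 → IsUnit g := by
    intro g h0 h1 h2
    exact hucop g h0 h1 h2
  have hR'0 : R' = 0 := aux_main4 u hu' hucop' E hE hEdeg hEcurve R' hR'hom hdeg hR'u
  -- Step 3: divisibility of the difference
  set F₁' := rename (Sum.inr : Fin 3 → Fin 2 ⊕ Fin 3) F₁ with hF1'def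
  set F₂' := rename (Sum.inr : Fin 3 → Fin 2 ⊕ Fin 3) F₂ with hF2'def
  have hdvd1 : G ∣ F₂' ^ i * P := by
    have hscale1 := aux_scale W φ₁ P hP
      (Sum.elim (fun t : Fin 2 => X (Sum.inl t)) (fun t : Fin 3 => X (Sum.inr t))) F₂'
    have hbaseX : (Sum.elim (fun t : Fin 2 => (X (Sum.inl t) : MvPolynomial (Fin 2 ⊕ Fin 3) K))
        (fun t : Fin 3 => X (Sum.inr t)))
        = (fun k => (X k : MvPolynomial (Fin 2 ⊕ Fin 3) K)) := by
      funext k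
      rcases k with t | t <;> rfl
    have hPid : aeval (Sum.elim (fun t : Fin 2 => (X (Sum.inl t) : MvPolynomial (Fin 2 ⊕ Fin 3) K))
        (fun t : Fin 3 => X (Sum.inr t))) P = P := by
      rw [hbaseX]
      exact aeval_X_left_apply P
    rw [hPid] at hscale1
    have hscale2 := aux_scale W φ₁ P hP
      (Sum.elim ![F₁', F₂'] (fun t : Fin 3 => X (Sum.inr t))) (X (Sum.inl 1))
    have hren : aeval (Sum.elim ![F₁', F₂'] (fun t : Fin 3 => X (Sum.inr t))) P
        = rename Sum.inr R' := by
      rw [hR'def]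
      rw [MvPolynomial.comp_aeval_apply (Sum.elim ![F₁, F₂] X)
        (rename (Sum.inr : Fin 3 → Fin 2 ⊕ Fin 3)) P]
      have hfeq : (fun i => (rename (Sum.inr : Fin 3 → Fin 2 ⊕ Fin 3)) (Sum.elim ![F₁, F₂] X i))
          = Sum.elim ![F₁', F₂'] (fun t : Fin 3 => X (Sum.inr t)) := by
        funext k
        rcases k with t | t
        · fin_cases t
          · show rename (Sum.inr : Fin 3 → Fin 2 ⊕ Fin 3) F₁ = F₁'
            rw [hF1'def]
          · show rename (Sum.inr : Fin 3 → Fin 2 ⊕ Fin 3) F₂ = F₂'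
            rw [hF2'def]
        · show rename (Sum.inr : Fin 3 → Fin 2 ⊕ Fin 3) (X t) = X (Sum.inr t)
          rw [rename_X]
      rw [hfeq]
    have hdiv : ∀ k, G ∣
        (fun k => F₂' ^ (φ₁ (W k)) * (Sum.elim (fun t : Fin 2 => (X (Sum.inl t) : MvPolynomial (Fin 2 ⊕ Fin 3) K)) (fun t : Fin 3 => X (Sum.inr t))) k) k
        - (fun k => (X (Sum.inl 1) : MvPolynomial (Fin 2 ⊕ Fin 3) K) ^ (φ₁ (W k)) * (Sum.elim ![F₁', F₂'] (fun t : Fin 3 => X (Sum.inr t))) k) k := by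
      rintro (t | t)
      · fin_cases t
        · show G ∣ F₂' ^ (1:ℕ) * X (Sum.inl 0) - X (Sum.inl 1) ^ (1:ℕ) * F₁'
          refine ⟨1, ?_⟩
          rw [hG]
          ring
        · show G ∣ F₂' ^ (1:ℕ) * X (Sum.inl 1) - X (Sum.inl 1) ^ (1:ℕ) * F₂'
          have : F₂' ^ (1:ℕ) * X (Sum.inl 1) - X (Sum.inl 1) ^ (1:ℕ) * F₂' = 0 := by ring
          rw [this]
          exact dvd_zero _
      · show G ∣ F₂' ^ (0:ℕ) * X (Sum.inr t) - X (Sum.inl 1) ^ (0:ℕ) * X (Sum.inr t)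
        have : F₂' ^ (0:ℕ) * X (Sum.inr t) - X (Sum.inl 1) ^ (0:ℕ)
            * (X (Sum.inr t) : MvPolynomial (Fin 2 ⊕ Fin 3) K) = 0 := by ring
        rw [this]
        exact dvd_zero _
    have hdiff := aux_dvd_aeval_sub _ _ G hdiv P
    rw [hscale1, hscale2, hren, hR'0, map_zero, mul_zero, sub_zero] at hdiff
    exact hdiff
  -- Step 4: conclude
  have hGprime : Prime G := UniqueFactorizationMonoid.irreducible_iff_prime.mp hGirr
  rcases hGprime.2.2 _ _ hdvd1 with h | h
  · exfalso
    have hGF₂ : G ∣ F₂' := hGprime.dvd_of_dvd_pow h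
    set β : MvPolynomial (Fin 2 ⊕ Fin 3) K →ₐ[K] MvPolynomial (Fin 3) K :=
      aeval (Sum.elim ![(0 : MvPolynomial (Fin 3) K), 1] X) with hβdef
    have hβF : ∀ Q : MvPolynomial (Fin 3) K, β (rename Sum.inr Q) = Q := by
      intro Q
      rw [hβdef, aeval_rename]
      have hcompX : ((Sum.elim ![(0 : MvPolynomial (Fin 3) K), 1] X) ∘ Sum.inr)
          = (fun k => (X k : MvPolynomial (Fin 3) K)) := rfl
      rw [hcompX, aeval_X_left_apply]
    have h2 := map_dvd β hGF₂
    rw [hF2'def, hβF] at h2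
    have h3 : β G = - F₁ := by
      rw [hG, map_sub, map_mul, map_mul, hF2'def, hF1'def]
      rw [hβF, hβF]
      rw [hβdef]
      simp
    rw [h3] at h2
    have hdvdF : F₁ ∣ F₂ := neg_dvd.mp h2
    have hunit := hFcop dvd_rfl hdvdF
    have h4 := aux_dvd_le hF₁ (isHomogeneous_one (Fin 3) K) one_ne_zero hunit.dvd
    omega
  · exact h
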